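/- The bivector Λ₄ = a·y·z·∂₂∧∂₃ + a·x·z·∂₃∧∂₁ + (b·x·y + z²)·∂₁∧∂₂ on ℝ³ is a Poisson bivector for all real a, b, i.e. the associated bracket satisfies the Jacobi identity. -/
import Mathlib


open MvPolynomial

/-- The Poisson bracket `{f,g} = Λ(df,dg)` of the bivector on ℝ³ with components
`A23 = Λ²³`, `A31 = Λ³¹`, `A12 = Λ¹²` (coordinates `x = X 0`, `y = X 1`, `z = X 2`). -/
noncomputable def pbr (A23 A31 A12 f g : MvPolynomial (Fin 3) ℝ) : MvPolynomial (Fin 3) ℝ :=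
  A23 * (pderiv 1 f * pderiv 2 g - pderiv 2 f * pderiv 1 g)
  + A31 * (pderiv 2 f * pderiv 0 g - pderiv 0 f * pderiv 2 g)
  + A12 * (pderiv 0 f * pderiv 1 g - pderiv 1 f * pderiv 0 g)

lemma my_pderiv_comm (i j : Fin 3) (f : MvPolynomial (Fin 3) ℝ) :
    pderiv i (pderiv j f) = pderiv j (pderiv i f) := by
  induction f using MvPolynomial.induction_on with
  | C a => simp
  | add f g hf hg => simp [hf, hg]
  | mul_X f k hf =>
    simp only [pderiv_mul, map_add, pderiv_X, hf]
    simp [Pi.single_apply, apply_ite (pderiv i), apply_ite (pderiv j)]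
    ring

lemma my_c10 (f : MvPolynomial (Fin 3) ℝ) : pderiv 1 (pderiv 0 f) = pderiv 0 (pderiv 1 f) := my_pderiv_comm 1 0 f
lemma my_c20 (f : MvPolynomial (Fin 3) ℝ) : pderiv 2 (pderiv 0 f) = pderiv 0 (pderiv 2 f) := my_pderiv_comm 2 0 f
lemma my_c21 (f : MvPolynomial (Fin 3) ℝ) : pderiv 2 (pderiv 1 f) = pderiv 1 (pderiv 2 f) := my_pderiv_comm 2 1 f

/-- The bivector `Λ₄ = a·yz·∂₂∧∂₃ + a·xz·∂₃∧∂₁ + (b·xy + z²)·∂₁∧∂₂` on ℝ³ is a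
Poisson bivector for all real `a, b`: its bracket satisfies the Jacobi identity. -/
theorem stmt4 (a b : ℝ) (f g h : MvPolynomial (Fin 3) ℝ) :
    pbr (C a * (X 1 * X 2)) (C a * (X 0 * X 2)) (C b * (X 0 * X 1) + X 2 ^ 2) f
      (pbr (C a * (X 1 * X 2)) (C a * (X 0 * X 2)) (C b * (X 0 * X 1) + X 2 ^ 2) g h)
    + pbr (C a * (X 1 * X 2)) (C a * (X 0 * X 2)) (C b * (X 0 * X 1) + X 2 ^ 2) g
      (pbr (C a * (X 1 * X 2)) (C a * (X 0 * X 2)) (C b * (X 0 * X 1) + X 2 ^ 2) h f)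
    + pbr (C a * (X 1 * X 2)) (C a * (X 0 * X 2)) (C b * (X 0 * X 1) + X 2 ^ 2) h
      (pbr (C a * (X 1 * X 2)) (C a * (X 0 * X 2)) (C b * (X 0 * X 1) + X 2 ^ 2) f g)
    = 0 := by
  simp only [pbr, pderiv_mul, pderiv_C, map_add, map_sub, pderiv_X, pow_two,
    Pi.single_apply, if_true, if_false]
  norm_num [Fin.ext_iff]
  simp only [my_c10, my_c20, my_c21]
  ring
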